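/- Let X be a real normed linear space with continuous dual X*, let C ⊆ X be a nonempty set, and let x* ∈ X* be nonzero. Then the following two conditions are equivalent: (i) for every M > 0 there exists N > 0 such that for all r ≥ N and all c ∈ C with ⟨x*, c⟩ ≥ r one has ‖c‖/r > M; (ii) for every ε > 0 there exists K > 0 such that for all c ∈ C with ‖c‖ ≥ K one has ⟨x*, c⟩/‖c‖ < ε. -/
import Mathlib


/-- For a nonempty set `C` in a real normed space `X` and a nonzero continuous
linear functional `x*`, the condition
`lim_{r→∞} inf{‖c‖/r : c ∈ C, ⟨x*,c⟩ ≥ r} = ∞` (condition (i)) is equivalent to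
`limsup_{c∈C, ‖c‖→∞} ⟨x*,c⟩/‖c‖ ≤ 0` (condition (ii)). -/
theorem statement0 {X : Type*} [NormedAddCommGroup X] [NormedSpace ℝ X]
    (C : Set X) (hC : C.Nonempty) (xs : X →L[ℝ] ℝ) (hxs : xs ≠ 0) :
    (∀ M > (0 : ℝ), ∃ N > (0 : ℝ), ∀ r ≥ N, ∀ c ∈ C, r ≤ xs c → M < ‖c‖ / r) ↔
      (∀ ε > (0 : ℝ), ∃ K > (0 : ℝ), ∀ c ∈ C, K ≤ ‖c‖ → xs c / ‖c‖ < ε) := by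
  constructor
  · intro h ε hε
    obtain ⟨N, hN, hN'⟩ := h (1 / ε) (by positivity)
    refine ⟨N / ε, by positivity, fun c hc hKc => ?_⟩
    have hcpos : 0 < ‖c‖ := lt_of_lt_of_le (by positivity) hKc
    by_contra hcon
    push_neg at hcon
    have h2 : ε * ‖c‖ ≤ xs c := (le_div_iff₀ hcpos).mp hcon
    have hr : N ≤ xs c := by
      calc N = ε * (N / ε) := by field_simp
        _ ≤ ε * ‖c‖ := by nlinarith
        _ ≤ xs c := h2
    have hrpos : 0 < xs c := lt_of_lt_of_le hN hr
    have := hN' (xs c) hr c hc le_rfl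
    have h1 : 1 / ε * xs c < ‖c‖ := (lt_div_iff₀ hrpos).mp this
    have : xs c < ε * ‖c‖ := by
      have := mul_lt_mul_of_pos_left h1 hε
      field_simp at this
      linarith
    linarith
  · intro h M hM
    obtain ⟨K, hK, hK'⟩ := h (1 / (2 * M)) (by positivity)
    refine ⟨‖xs‖ * K + 1, by positivity, fun r hr c hc hrc => ?_⟩
    have hrpos : 0 < r := lt_of_lt_of_le (by positivity) hr
    by_cases hcK : K ≤ ‖c‖
    · have hcpos : 0 < ‖c‖ := lt_of_lt_of_le hK hcK
      have h1 : xs c / ‖c‖ < 1 / (2 * M) := hK' c hc hcK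
      have h2 : xs c < ‖c‖ / (2 * M) := by
        have := (div_lt_iff₀ hcpos).mp h1
        rw [div_mul_eq_mul_div, one_mul] at this
        linarith
      have : r < ‖c‖ / (2 * M) := lt_of_le_of_lt hrc h2
      rw [lt_div_iff₀ (by positivity)] at this
      rw [lt_div_iff₀ hrpos]
      nlinarith
    · exfalso
      push_neg at hcK
      have h1 : xs c ≤ ‖xs‖ * ‖c‖ := le_trans (le_abs_self _) (by simpa [Real.norm_eq_abs] using xs.le_opNorm c)
      have h2 : ‖xs‖ * ‖c‖ ≤ ‖xs‖ * K := by
        have := norm_nonneg xs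
        nlinarith
      linarith
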